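/- Assume LICQ, let κ be a GLC, and let x, x̂ ∈ ℝ^{n_x}. Define D(x) = {j : B(z*(x̂), κ‖x−x̂‖) ⊆ Z_j(x)} and I(x) = A(x̂) ∪ ({1,…,n_c} \ D(x)). If √(1+κ²)·‖x − x̂‖ ≤ σ_i for some i ∈ {1,…,n_c}, then the cardinality of I(x) is at most n_z + i. -/

import Mathlib

/-- Theorem 3: under LICQ, if `√(1+κ²)‖x − x̂‖ ≤ σ_i`, then the trimming
index set `I(x) = A(x̂) ∪ ({1,…,n_c} \\ D(x))` has at most `n_z + i` elements. -/
theorem trimmed_index_card_le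
    (n_x n_z n_c : ℕ) (hnx : 0 < n_x) (hnz : 0 < n_z) (hnc : 0 < n_c)
    (H : Matrix (Fin n_z) (Fin n_z) ℝ) (hH : H.PosDef)
    (F : Matrix (Fin n_x) (Fin n_z) ℝ)
    (G : Matrix (Fin n_c) (Fin n_z) ℝ)
    (S : Matrix (Fin n_c) (Fin n_x) ℝ)
    (w : Fin n_c → ℝ)
    (V : EuclideanSpace ℝ (Fin n_x) → EuclideanSpace ℝ (Fin n_z) → ℝ)
    (hV : ∀ x z, V x z = (1 / 2) * dotProduct z (H.mulVec z)
      + dotProduct x (F.mulVec z))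
    (Z : EuclideanSpace ℝ (Fin n_x) → Set (Fin n_c) → Set (EuclideanSpace ℝ (Fin n_z)))
    (hZ : ∀ x I, Z x I =
      {z : EuclideanSpace ℝ (Fin n_z) | ∀ j ∈ I, dotProduct (G j) z ≤ dotProduct (S j) x + w j})
    (hfeas : ∀ x, (Z x Set.univ).Nonempty)
    (zstar : EuclideanSpace ℝ (Fin n_x) → Set (Fin n_c) → EuclideanSpace ℝ (Fin n_z))
    (hmem : ∀ x I, zstar x I ∈ Z x I)
    (hopt : ∀ x I, ∀ z ∈ Z x I, V x (zstar x I) ≤ V x z)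
    (huniq : ∀ x I, ∀ z ∈ Z x I, (∀ z' ∈ Z x I, V x z ≤ V x z') → z = zstar x I)
    (hLICQ : ∀ x : EuclideanSpace ℝ (Fin n_x), LinearIndependent ℝ
      (fun j : {j : Fin n_c // dotProduct (G j) (zstar x Set.univ)
        = dotProduct (S j) x + w j} => G j.1))
    (κ : ℝ) (hκ0 : 0 ≤ κ)
    (hGLC : ∀ (x₁ x₂ : EuclideanSpace ℝ (Fin n_x)) (I : Set (Fin n_c)),
      ‖zstar x₁ I - zstar x₂ I‖ ≤ κ * ‖x₁ - x₂‖)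
    (Vl : Set (WithLp 2 (EuclideanSpace ℝ (Fin n_x) × EuclideanSpace ℝ (Fin n_z))))
    (hVl : Vl = {v | ∀ j, dotProduct (G j) ((WithLp.equiv 2 _) v).2
      ≤ dotProduct (S j) ((WithLp.equiv 2 _) v).1 + w j})
    (N : WithLp 2 (EuclideanSpace ℝ (Fin n_x) × EuclideanSpace ℝ (Fin n_z)) → ℝ → ℕ)
    (hN : ∀ v r, N v r = Set.ncard {j : Fin n_c | Metric.closedBall v r ⊆
      {u | dotProduct (G j) ((WithLp.equiv 2 _) u).2
        - dotProduct (S j) ((WithLp.equiv 2 _) u).1 ≤ w j}})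
    (Γ : ℕ → Set ℝ)
    (hΓ : ∀ i, Γ i = {r : ℝ | 0 ≤ r ∧ ∀ v ∈ Vl, n_c - i ≤ N v r})
    (hVlne : Vl.Nonempty)
    (x xh : EuclideanSpace ℝ (Fin n_x))
    (i : ℕ) (hi : 1 ≤ i) (hin : i ≤ n_c)
    (hdist : ENNReal.ofReal (Real.sqrt (1 + κ ^ 2) * ‖x - xh‖)
      ≤ sSup (ENNReal.ofReal '' Γ i)) :
    Set.ncard
      ({j | dotProduct (G j) (zstar xh Set.univ)
          = dotProduct (S j) xh + w j} ∪
        {j | Metric.closedBall (zstar xh Set.univ) (κ * ‖x - xh‖) ⊆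
          {z : EuclideanSpace ℝ (Fin n_z) |
            dotProduct (G j) z ≤ dotProduct (S j) x + w j}}ᶜ)
      ≤ n_z + i := by
  classical
  set zh : EuclideanSpace ℝ (Fin n_z) := zstar xh Set.univ with hzh
  set d : ℝ := ‖x - xh‖ with hdd
  set r : ℝ := Real.sqrt (1 + κ ^ 2) * d with hrr
  have hd0 : 0 ≤ d := norm_nonneg _
  have hr0 : 0 ≤ r := mul_nonneg (Real.sqrt_nonneg _) hd0
  -- the lifted point
  set v : WithLp 2 (EuclideanSpace ℝ (Fin n_x) × EuclideanSpace ℝ (Fin n_z)) :=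
    (WithLp.equiv 2 (EuclideanSpace ℝ (Fin n_x) × EuclideanSpace ℝ (Fin n_z))).symm (xh, zh)
    with hv
  have hev : (WithLp.equiv 2 _) v = (xh, zh) := Equiv.apply_symm_apply _ _
  -- the linear functional
  set φ : Fin n_c → WithLp 2 (EuclideanSpace ℝ (Fin n_x) × EuclideanSpace ℝ (Fin n_z)) → ℝ :=
    fun j u => dotProduct (G j) ((WithLp.equiv 2 _) u).2
      - dotProduct (S j) ((WithLp.equiv 2 _) u).1 with hφ
  set Good : ℝ → Set (Fin n_c) := fun s =>
    {j | Metric.closedBall v s ⊆ {u | φ j u ≤ w j}} with hGood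
  have hNG : ∀ s, N v s = (Good s).ncard := by
    intro s; rw [hN]
  -- feasibility of zh
  have hzZ : ∀ j, dotProduct (G j) zh ≤ dotProduct (S j) xh + w j := by
    have := hmem xh Set.univ
    rw [hZ] at this
    exact fun j => this j (Set.mem_univ j)
  have hvVl : v ∈ Vl := by
    rw [hVl]
    intro j
    rw [hev]
    exact hzZ j
  have hφv : ∀ j, φ j v ≤ w j := by
    intro j; rw [hφ]; simp only [hev]; have := hzZ j; linarith
  -- affinity of φ
  have hphi : ∀ j (a b : WithLp 2 (EuclideanSpace ℝ (Fin n_x) × EuclideanSpace ℝ (Fin n_z)))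
      (t : ℝ), φ j (a + t • (b - a)) = φ j a + t * (φ j b - φ j a) := by
    intro j a b t
    rw [hφ]
    simp only [WithLp.equiv_apply, WithLp.ofLp_add, WithLp.ofLp_smul, WithLp.ofLp_sub,
      Prod.fst_add, Prod.snd_add, Prod.smul_fst, Prod.smul_snd, Prod.fst_sub, Prod.snd_sub]
    simp [dotProduct, PiLp.add_apply, PiLp.smul_apply, PiLp.sub_apply, smul_eq_mul,
      mul_add, mul_sub, Finset.sum_add_distrib, Finset.sum_sub_distrib, Finset.mul_sum,
      mul_left_comm]
    ring
  -- monotonicity of Good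
  have mono : ∀ s₁ s₂ : ℝ, s₁ ≤ s₂ → Good s₂ ⊆ Good s₁ := by
    intro s₁ s₂ h j hj
    exact (Metric.closedBall_subset_closedBall h).trans hj
  -- shrinking lemma
  have key : ∀ (s : ℝ) (j : Fin n_c), j ∉ Good s → ∃ s', 0 ≤ s' ∧ s' < s ∧ j ∉ Good s' := by
    intro s j hj
    rw [hGood, Set.mem_setOf_eq, Set.not_subset] at hj
    obtain ⟨u, hu, hux⟩ := hj
    rw [Set.mem_setOf_eq, not_le] at hux
    have hune : u ≠ v := by
      intro h; rw [h] at hux; exact absurd hux (not_lt.mpr (hφv j))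
    have hb0 : φ j v - w j ≤ 0 := by have := hφv j; linarith
    have hb : 0 < φ j u - w j := by linarith
    set b₀ : ℝ := φ j v - w j with hb₀d
    set b : ℝ := φ j u - w j with hbd
    have hdpos : 0 < dist u v := dist_pos.mpr hune
    have hds : dist u v ≤ s := Metric.mem_closedBall.mp hu
    have hspos : 0 < s := lt_of_lt_of_le hdpos hds
    set t : ℝ := (b / 2 - b₀) / (b - b₀) with htd
    have hbb0 : 0 < b - b₀ := by linarith
    have htpos : 0 < t := div_pos (by linarith) hbb0
    have htlt : t < 1 := (div_lt_one hbb0).mpr (by linarith)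
    refine ⟨t * s, le_of_lt (mul_pos htpos hspos), ?_, ?_⟩
    · nlinarith
    · rw [hGood, Set.mem_setOf_eq, Set.not_subset]
      refine ⟨v + t • (u - v), ?_, ?_⟩
      · rw [Metric.mem_closedBall, dist_eq_norm, add_sub_cancel_left, norm_smul,
          Real.norm_eq_abs, abs_of_pos htpos]
        have : ‖u - v‖ ≤ s := by rw [← dist_eq_norm]; exact hds
        exact mul_le_mul_of_nonneg_left this (le_of_lt htpos)
      · rw [Set.mem_setOf_eq, not_le, hphi j v u t]
        have ht : t * (b - b₀) = b / 2 - b₀ := div_mul_cancel₀ _ (ne_of_gt hbb0)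
        have : φ j u - φ j v = b - b₀ := by rw [hbd, hb₀d]; ring
        rw [this, ht]
        have : φ j v = w j + b₀ := by rw [hb₀d]; ring
        rw [this]; linarith
  -- members of Γ i control Good
  have hGoodN : ∀ s ∈ Γ i, n_c - i ≤ (Good s).ncard := by
    intro s hs
    rw [hΓ] at hs
    have := hs.2 v hvVl
    rwa [hNG] at this
  -- cardinality of bad set
  have hBadcard : ((Good r)ᶜ).ncard ≤ i := by
    rcases Set.eq_empty_or_nonempty ((Good r)ᶜ) with he | hne
    · rw [he]; simp
    · have key' : ∀ j ∈ (Good r)ᶜ, ∃ s', 0 ≤ s' ∧ s' < r ∧ j ∉ Good s' :=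
        fun j hj => key r j hj
      choose! f hf0 hf1 hf2 using key'
      set T : Finset (Fin n_c) := (Set.toFinite ((Good r)ᶜ)).toFinset with hT
      have hTne : T.Nonempty := (Set.Finite.toFinset_nonempty _).mpr hne
      set R : ℝ := T.sup' hTne f with hR
      have hmemT : ∀ j, j ∈ T ↔ j ∈ (Good r)ᶜ := fun j => Set.Finite.mem_toFinset _
      have hRlt : R < r := Finset.sup'_lt_iff hTne |>.mpr
        (fun j hj => hf1 j ((hmemT j).mp hj))
      have hR0 : 0 ≤ R := by
        obtain ⟨j₀, hj₀⟩ := hTne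
        exact le_trans (hf0 j₀ ((hmemT j₀).mp hj₀)) (Finset.le_sup' f hj₀)
      have hrpos : 0 < r := lt_of_le_of_lt hR0 hRlt
      have hlt1 : ENNReal.ofReal R < sSup (ENNReal.ofReal '' Γ i) :=
        lt_of_lt_of_le ((ENNReal.ofReal_lt_ofReal_iff hrpos).mpr hRlt) hdist
      rw [lt_sSup_iff] at hlt1
      obtain ⟨e, ⟨s, hsΓ, rfl⟩, hlt2⟩ := hlt1
      have hRs : R < s := (ENNReal.ofReal_lt_ofReal_iff_of_nonneg hR0).mp hlt2
      have hsub : Good s ⊆ Good r := by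
        intro j hjs
        by_contra hj
        have hfj : f j ≤ s := by
          have : f j ≤ R := Finset.le_sup' f ((hmemT j).mpr hj)
          linarith
        exact hf2 j hj (mono (f j) s hfj hjs)
      have h1' := hGoodN s hsΓ
      have h2' : (Good s).ncard ≤ (Good r).ncard := Set.ncard_le_ncard hsub (Set.toFinite _)
      have h3' : (Good r).ncard + ((Good r)ᶜ).ncard = n_c := by
        rw [Set.ncard_add_ncard_compl, Nat.card_eq_fintype_card, Fintype.card_fin]
      omega
  -- active set cardinality
  have hA : ({j | dotProduct (G j) zh
      = dotProduct (S j) xh + w j}).ncard ≤ n_z := by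
    have h := (hLICQ xh).fintype_card_le_finrank
    rw [Module.finrank_fintype_fun_eq_card, Fintype.card_fin] at h
    rw [← Nat.card_coe_set_eq, Nat.card_eq_fintype_card]
    convert h using 1
    exact Fintype.card_congr (Equiv.refl _)
  -- D(x) complement is inside bad set
  have hDc : ({j | Metric.closedBall zh (κ * d) ⊆
      {z : EuclideanSpace ℝ (Fin n_z) |
        dotProduct (G j) z ≤ dotProduct (S j) x + w j}})ᶜ ⊆ (Good r)ᶜ := by
    apply Set.compl_subset_compl.mpr
    intro j hj
    intro z hz
    set u : WithLp 2 (EuclideanSpace ℝ (Fin n_x) × EuclideanSpace ℝ (Fin n_z)) :=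
      (WithLp.equiv 2 (EuclideanSpace ℝ (Fin n_x) × EuclideanSpace ℝ (Fin n_z))).symm (x, z)
      with hu
    have heu : (WithLp.equiv 2 _) u = (x, z) := Equiv.apply_symm_apply _ _
    have huv : u ∈ Metric.closedBall v r := by
      rw [Metric.mem_closedBall, dist_eq_norm]
      have hfst : (u - v).fst = x - xh := by
        have : (WithLp.equiv 2 _) (u - v) = (x, z) - (xh, zh) := by
          show (WithLp.equiv 2 _) u - (WithLp.equiv 2 _) v = _
          rw [heu, hev]
        exact congrArg Prod.fst this
      have hsnd : (u - v).snd = z - zh := by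
        have : (WithLp.equiv 2 _) (u - v) = (x, z) - (xh, zh) := by
          show (WithLp.equiv 2 _) u - (WithLp.equiv 2 _) v = _
          rw [heu, hev]
        exact congrArg Prod.snd this
      have hsq : ‖u - v‖ ^ 2 = ‖x - xh‖ ^ 2 + ‖z - zh‖ ^ 2 := by
        rw [WithLp.prod_norm_sq_eq_of_L2, hfst, hsnd]
      have hzb : ‖z - zh‖ ≤ κ * d := by
        rw [← dist_eq_norm]; exact Metric.mem_closedBall.mp hz
      have hzb0 : 0 ≤ ‖z - zh‖ := norm_nonneg _
      have hr2 : r ^ 2 = (1 + κ ^ 2) * d ^ 2 := by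
        rw [hrr, mul_pow, Real.sq_sqrt (by positivity)]
      have hle2 : ‖u - v‖ ^ 2 ≤ r ^ 2 := by
        rw [hsq, hr2, ← hdd]
        nlinarith
      have : ‖u - v‖ = Real.sqrt (‖u - v‖ ^ 2) := (Real.sqrt_sq (norm_nonneg _)).symm
      rw [this, ← Real.sqrt_sq hr0]
      exact Real.sqrt_le_sqrt hle2
    have := hj huv
    rw [Set.mem_setOf_eq, hφ] at this
    simp only [heu] at this
    rw [Set.mem_setOf_eq]
    linarith
  -- assemble
  calc Set.ncard _ ≤ ({j | dotProduct (G j) zh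
          = dotProduct (S j) xh + w j}).ncard +
        (({j | Metric.closedBall zh (κ * d) ⊆
          {z : EuclideanSpace ℝ (Fin n_z) |
            dotProduct (G j) z ≤ dotProduct (S j) x + w j}})ᶜ).ncard :=
      Set.ncard_union_le _ _
    _ ≤ n_z + ((Good r)ᶜ).ncard :=
      add_le_add hA (Set.ncard_le_ncard hDc (Set.toFinite _))
    _ ≤ n_z + i := Nat.add_le_add_left hBadcard _
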